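/- The sequences (λ₁,ₙ) and (λ₂,ₙ) are convergent, with limₙ→∞ λ₁,ₙ = L₁ = (1 + Λ₁ − Λ₂ + √Λ)/2 and limₙ→∞ λ₂,ₙ = L₂ = (1 + Λ₂ − Λ₁ + √Λ)/2. -/

import Mathlib

open Filter Topology

set_option maxHeartbeats 1000000

private lemma aux_Lambda_pos (a b : ℝ) (ha : 0 < a) (hb : 0 < b) (hab : a + b < 1) :
    0 < (a ^ 2 - b ^ 2) ^ 2 + 1 - 2 * (a ^ 2 + b ^ 2) := by
  nlinarith [mul_pos (show (0:ℝ) < 1 - (a + b) ^ 2 by nlinarith)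
    (show (0:ℝ) < 1 - (a - b) ^ 2 by nlinarith)]

theorem lambda_seq_convergence
    (ρ ρ₁ ρ₂ : ℝ) (hρ₁ : 0 < ρ₁) (hρ₂ : 0 < ρ₂) (hsum : ρ₁ + ρ₂ < ρ)
    (Λ₁ Λ₂ Λ : ℝ) (hΛ₁ : Λ₁ = (ρ₁ / ρ) ^ 2) (hΛ₂ : Λ₂ = (ρ₂ / ρ) ^ 2)
    (hΛ : Λ = (Λ₁ - Λ₂) ^ 2 + 1 - 2 * (Λ₁ + Λ₂))
    (l₁ l₂ : ℕ → ℝ) (hl₁0 : l₁ 0 = 1) (hl₂0 : l₂ 0 = 1)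
    (hl₁ : ∀ n : ℕ, l₁ (n + 1) = 1 - Λ₂ / l₂ n)
    (hl₂ : ∀ n : ℕ, l₂ (n + 1) = 1 - Λ₁ / l₁ n)
    (L₁ L₂ : ℝ)
    (hL₁ : L₁ = (1 + Λ₁ - Λ₂ + Real.sqrt Λ) / 2)
    (hL₂ : L₂ = (1 + Λ₂ - Λ₁ + Real.sqrt Λ) / 2) :
    Filter.Tendsto l₁ Filter.atTop (nhds L₁) ∧
    Filter.Tendsto l₂ Filter.atTop (nhds L₂) := by
  have hρ : 0 < ρ := lt_trans (by linarith) hsum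
  have ha : 0 < ρ₁ / ρ := div_pos hρ₁ hρ
  have hb : 0 < ρ₂ / ρ := div_pos hρ₂ hρ
  have hab : ρ₁ / ρ + ρ₂ / ρ < 1 := by
    rw [← add_div, div_lt_one hρ]; exact hsum
  have hΛ₁pos : 0 < Λ₁ := by rw [hΛ₁]; positivity
  have hΛ₂pos : 0 < Λ₂ := by rw [hΛ₂]; positivity
  have hΛ₁lt : Λ₁ < 1 := by
    rw [hΛ₁]; exact pow_lt_one₀ ha.le (by linarith) two_ne_zero
  have hΛ₂lt : Λ₂ < 1 := by
    rw [hΛ₂]; exact pow_lt_one₀ hb.le (by linarith) two_ne_zero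
  have hΛpos : 0 < Λ := by
    rw [hΛ, hΛ₁, hΛ₂]; exact aux_Lambda_pos _ _ ha hb hab
  clear ha hb hab hΛ₁ hΛ₂ hsum hρ₁ hρ₂ hρ
  clear ρ ρ₁ ρ₂
  set s := Real.sqrt Λ with hs_def
  have hs2 : s ^ 2 = Λ := Real.sq_sqrt hΛpos.le
  have hs : 0 < s := Real.sqrt_pos.2 hΛpos
  have hL₁pos : 0 < L₁ := by rw [hL₁]; linarith
  have hL₂pos : 0 < L₂ := by rw [hL₂]; linarith
  have hsle₁ : s ≤ 1 - Λ₁ + Λ₂ := by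
    have hc : 0 ≤ 1 - Λ₁ + Λ₂ := by linarith
    calc s ≤ Real.sqrt ((1 - Λ₁ + Λ₂) ^ 2) := by
            apply Real.sqrt_le_sqrt; rw [hΛ]; nlinarith [hΛ₂pos]
      _ = 1 - Λ₁ + Λ₂ := Real.sqrt_sq hc
  have hsle₂ : s ≤ 1 - Λ₂ + Λ₁ := by
    have hc : 0 ≤ 1 - Λ₂ + Λ₁ := by linarith
    calc s ≤ Real.sqrt ((1 - Λ₂ + Λ₁) ^ 2) := by
            apply Real.sqrt_le_sqrt; rw [hΛ]; nlinarith [hΛ₁pos]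
      _ = 1 - Λ₂ + Λ₁ := Real.sqrt_sq hc
  have hL₁le1 : L₁ ≤ 1 := by rw [hL₁]; linarith
  have hL₂le1 : L₂ ≤ 1 := by rw [hL₂]; linarith
  -- fixed point identities
  have hfix₁ : L₁ * L₂ = L₂ - Λ₂ := by
    rw [hL₁, hL₂]; rw [hΛ] at hs2; linear_combination (1/4 : ℝ) * hs2
  have hfix₂ : L₁ * L₂ = L₁ - Λ₁ := by
    rw [hL₁, hL₂]; rw [hΛ] at hs2; linear_combination (1/4 : ℝ) * hs2
  have hfp₁ : L₁ = 1 - Λ₂ / L₂ := by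
    field_simp
    linarith [hfix₁]
  have hfp₂ : L₂ = 1 - Λ₁ / L₁ := by
    field_simp
    nlinarith [hfix₂]
  have key : ∀ n, (L₁ ≤ l₁ n ∧ L₂ ≤ l₂ n) ∧ (l₁ (n+1) ≤ l₁ n ∧ l₂ (n+1) ≤ l₂ n) := by
    intro n
    induction n with
    | zero =>
      refine ⟨⟨by rw [hl₁0]; exact hL₁le1, by rw [hl₂0]; exact hL₂le1, ⟩, ?_, ?_⟩
      · rw [hl₁ 0, hl₂0, hl₁0]
        have : Λ₂ / 1 = Λ₂ := div_one _
        rw [this]; linarith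
      · rw [hl₂ 0, hl₁0, hl₂0]
        rw [div_one]; linarith
    | succ n ih =>
      obtain ⟨⟨h1, h2⟩, h3, h4⟩ := ih
      have hp₁ : 0 < l₁ n := lt_of_lt_of_le hL₁pos h1
      have hp₂ : 0 < l₂ n := lt_of_lt_of_le hL₂pos h2
      have g1 : L₁ ≤ l₁ (n+1) := by
        rw [hl₁ n, hfp₁]
        have : Λ₂ / l₂ n ≤ Λ₂ / L₂ := div_le_div_of_nonneg_left hΛ₂pos.le hL₂pos h2
        linarith
      have g2 : L₂ ≤ l₂ (n+1) := by
        rw [hl₂ n, hfp₂]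
        have : Λ₁ / l₁ n ≤ Λ₁ / L₁ := div_le_div_of_nonneg_left hΛ₁pos.le hL₁pos h1
        linarith
      have hp₁' : 0 < l₁ (n+1) := lt_of_lt_of_le hL₁pos g1
      have hp₂' : 0 < l₂ (n+1) := lt_of_lt_of_le hL₂pos g2
      refine ⟨⟨g1, g2⟩, ?_, ?_⟩
      · rw [hl₁ (n+1), hl₁ n]
        have : Λ₂ / l₂ n ≤ Λ₂ / l₂ (n+1) :=
          div_le_div_of_nonneg_left hΛ₂pos.le hp₂' h4
        linarith
      · rw [hl₂ (n+1), hl₂ n]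
        have : Λ₁ / l₁ n ≤ Λ₁ / l₁ (n+1) :=
          div_le_div_of_nonneg_left hΛ₁pos.le hp₁' h3
        linarith
  have hanti₁ : Antitone l₁ := antitone_nat_of_succ_le fun n => (key n).2.1
  have hanti₂ : Antitone l₂ := antitone_nat_of_succ_le fun n => (key n).2.2
  have hbdd₁ : BddBelow (Set.range l₁) := ⟨L₁, by rintro _ ⟨n, rfl⟩; exact (key n).1.1⟩
  have hbdd₂ : BddBelow (Set.range l₂) := ⟨L₂, by rintro _ ⟨n, rfl⟩; exact (key n).1.2⟩
  set M₁ := ⨅ n, l₁ n with hM₁_def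
  set M₂ := ⨅ n, l₂ n with hM₂_def
  have h₁ : Tendsto l₁ atTop (𝓝 M₁) := tendsto_atTop_ciInf hanti₁ hbdd₁
  have h₂ : Tendsto l₂ atTop (𝓝 M₂) := tendsto_atTop_ciInf hanti₂ hbdd₂
  have hM₁ge : L₁ ≤ M₁ := le_ciInf fun n => (key n).1.1
  have hM₂ge : L₂ ≤ M₂ := le_ciInf fun n => (key n).1.2
  have hM₁ne : M₁ ≠ 0 := ne_of_gt (lt_of_lt_of_le hL₁pos hM₁ge)
  have hM₂ne : M₂ ≠ 0 := ne_of_gt (lt_of_lt_of_le hL₂pos hM₂ge)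
  have h₁' : Tendsto (fun n => l₁ (n+1)) atTop (𝓝 M₁) :=
    h₁.comp (tendsto_add_atTop_nat 1)
  have h₂' : Tendsto (fun n => l₂ (n+1)) atTop (𝓝 M₂) :=
    h₂.comp (tendsto_add_atTop_nat 1)
  have heq₁ : M₁ = 1 - Λ₂ / M₂ := by
    refine tendsto_nhds_unique h₁' ?_
    have : Tendsto (fun n => 1 - Λ₂ / l₂ n) atTop (𝓝 (1 - Λ₂ / M₂)) :=
      tendsto_const_nhds.sub (tendsto_const_nhds.div h₂ hM₂ne)
    exact this.congr fun n => (hl₁ n).symm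
  have heq₂ : M₂ = 1 - Λ₁ / M₁ := by
    refine tendsto_nhds_unique h₂' ?_
    have : Tendsto (fun n => 1 - Λ₁ / l₁ n) atTop (𝓝 (1 - Λ₁ / M₁)) :=
      tendsto_const_nhds.sub (tendsto_const_nhds.div h₁ hM₁ne)
    exact this.congr fun n => (hl₂ n).symm
  have e₁ : M₁ * M₂ = M₂ - Λ₂ := by
    field_simp at heq₁
    linarith [heq₁]
  have e₂ : M₁ * M₂ = M₁ - Λ₁ := by
    field_simp at heq₂
    nlinarith [heq₂]
  have hMdiff : M₂ = M₁ + Λ₂ - Λ₁ := by nlinarith [e₁, e₂]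
  have hq : M₁ ^ 2 + (Λ₂ - Λ₁ - 1) * M₁ + Λ₁ = 0 := by
    have := e₂
    rw [hMdiff] at this
    ring_nf at this ⊢
    nlinarith [this]
  have hfactor : (M₁ - L₁) * (M₁ - (1 + Λ₁ - Λ₂ - s) / 2) = 0 := by
    rw [hL₁]
    rw [hΛ] at hs2
    linear_combination hq - (1/4 : ℝ) * hs2
  have hM₁eq : M₁ = L₁ := by
    have hgt : 0 < M₁ - (1 + Λ₁ - Λ₂ - s) / 2 := by
      rw [hL₁] at hM₁ge; linarith
    have := mul_eq_zero.1 hfactor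
    rcases this with h | h
    · linarith [sub_eq_zero.1 h]
    · exact absurd h (ne_of_gt hgt)
  have hM₂eq : M₂ = L₂ := by
    rw [hMdiff, hM₁eq, hL₁, hL₂]; ring
  exact ⟨hM₁eq ▸ h₁, hM₂eq ▸ h₂⟩
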